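/- Let n, ℓ, δ be positive integers with 2δ < ℓ ≤ n/2 and ℓ ∣ n, and set b = n/ℓ. The marker code D_δ(ℓ,n) is block-by-block decodable: there exist functions f₁,…,f_{b−1} : 𝔽₂^ℓ → {0,…,δ} such that for every x ∈ D_δ(ℓ,n) and every δ-per-block deletion output y of x with deletion pattern d, setting α₁ = 1 and α_{j+1} = α_j + ℓ − d_j, one has f_j(y_{α_j},…,y_{α_j+ℓ−1}) = d_j for all j = 1,…,b−1. Moreover, one may take each f_j to be the map sending w ∈ 𝔽₂^ℓ to 0 if the last δ bits of w are all 1, and to δ − β + 1 otherwise, where β is the least index in {1,…,δ} with w_{ℓ−δ+β} = 0. -/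

import Mathlib

/-- The `i`-th bit (0-indexed) of `x ∈ 𝔽₂ⁿ`, with default `false` out of range. -/
def bitAt (n : ℕ) (x : Fin n → Bool) (i : ℕ) : Bool :=
  if h : i < n then x ⟨i, h⟩ else false

/-- The `j`-th block (1-indexed, of length `ℓ`) of `x ∈ 𝔽₂ⁿ`, as a list. -/
def blockList (n ℓ : ℕ) (x : Fin n → Bool) (j : ℕ) : List Bool :=
  (List.range ℓ).map (fun i => bitAt n x ((j - 1) * ℓ + i))

/-- `y` is a `δ`-per-block deletion output of `x` with deletion pattern `d`:
`y = ⟨y¹,…,y^b⟩` where each `y^j` is a subsequence of block `j` of `x`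
of length `ℓ - d j`, with `d j ≤ δ`. -/
def IsDelOutput (n ℓ δ : ℕ) (x : Fin n → Bool) (d : ℕ → ℕ) (y : List Bool) : Prop :=
  ∃ ys : ℕ → List Bool,
    (∀ j ∈ Finset.Icc 1 (n / ℓ),
      (ys j).Sublist (blockList n ℓ x j) ∧ d j ≤ δ ∧ (ys j).length = ℓ - d j) ∧
    y = ((List.range (n / ℓ)).map (fun j => ys (j + 1))).flatten

/-- `C ⊆ 𝔽₂ⁿ` detects up to `δ` deletions per block. -/
def Detects (n ℓ δ : ℕ) (C : Set (Fin n → Bool)) : Prop :=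
  ∀ x ∈ C, ∀ x' ∈ C, ∀ d d' : ℕ → ℕ, ∀ y : List Bool,
    IsDelOutput n ℓ δ x d y → IsDelOutput n ℓ δ x' d' y →
    ∀ j ∈ Finset.Icc 1 (n / ℓ), d j = d' j

/-- The 0-indexed starting position `α_j - 1` of block `j` in the output,
given the deletion pattern `d`. -/
def startIdx (ℓ : ℕ) (d : ℕ → ℕ) (j : ℕ) : ℕ :=
  ∑ m ∈ Finset.Icc 1 (j - 1), (ℓ - d m)

/-- The window `(y_{α_j},…,y_{α_j+ℓ-1})` of length `ℓ` of the list `y`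
starting at 0-indexed position `s = α_j - 1`. -/
def window (ℓ : ℕ) (y : List Bool) (s : ℕ) : Fin ℓ → Bool :=
  fun i => y.getD (s + i) false

/-- `C` is block-by-block decodable. -/
def BlockDecodable (n ℓ δ : ℕ) (C : Set (Fin n → Bool)) : Prop :=
  ∃ f : ℕ → (Fin ℓ → Bool) → ℕ,
    (∀ j w, f j w ≤ δ) ∧
    ∀ x ∈ C, ∀ d : ℕ → ℕ, ∀ y : List Bool, IsDelOutput n ℓ δ x d y →
      ∀ j ∈ Finset.Icc 1 (n / ℓ - 1),
        f j (window ℓ y (startIdx ℓ d j)) = d j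

/-- The marker code D_delta(l,n): the last d bits of blocks 1..b-1 are all 1
and the first d+1 bits of blocks 2..b are all 0. -/
def markerCode (n ℓ δ : ℕ) : Set (Fin n → Bool) :=
  {x | (∀ j ∈ Finset.Icc 1 (n / ℓ - 1), ∀ i ∈ Finset.Icc (ℓ - δ + 1) ℓ,
          bitAt n x ((j - 1) * ℓ + i - 1) = true) ∧
       (∀ j ∈ Finset.Icc 2 (n / ℓ), ∀ i ∈ Finset.Icc 1 (δ + 1),
          bitAt n x ((j - 1) * ℓ + i - 1) = false)}

/-- The explicit block decoder: output 0 if the last d bits of w are all 1,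
and d - beta + 1 where beta is the least index in [1,d] with w_(l-d+beta) = 0 otherwise. -/
def markerDecode (ℓ δ : ℕ) (w : Fin ℓ → Bool) : ℕ :=
  if h : ((Finset.Icc 1 δ).filter (fun β => bitAt ℓ w (ℓ - δ + β - 1) = false)).Nonempty
  then δ - ((Finset.Icc 1 δ).filter (fun β => bitAt ℓ w (ℓ - δ + β - 1) = false)).min' h + 1
  else 0

/-- Index tracking for sublists: the `i`-th element of a sublist `s` of `t`
equals the `m`-th element of `t` for some `m` with `i ≤ m` and
`m + s.length ≤ i + t.length`. -/
lemma sublist_getElem {α : Type*} {s t : List α} (h : s.Sublist t) :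
    ∀ i : ℕ, ∀ hi : i < s.length,
      ∃ m : ℕ, i ≤ m ∧ m + s.length ≤ i + t.length ∧
        ∃ hm : m < t.length, s[i] = t[m] := by
  induction h with
  | slnil => intro i hi; simp at hi
  | cons a h ih =>
      intro i hi
      obtain ⟨m, h1, h2, hm, h3⟩ := ih i hi
      exact ⟨m + 1, by omega, by simp; omega, by simp; omega, by simpa using h3⟩
  | cons_cons a h ih =>
      intro i hi
      match i with
      | 0 =>
          refine ⟨0, le_rfl, ?_, by simp, by simp⟩
          have := h.length_le
          simp; omega
      | i + 1 =>
          obtain ⟨m, h1, h2, hm, h3⟩ := ih i (by simpa using hi)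
          exact ⟨m + 1, by omega, by simp; omega, by simp; omega, by simpa using h3⟩

lemma markerDecode_le (ℓ δ : ℕ) (w : Fin ℓ → Bool) : markerDecode ℓ δ w ≤ δ := by
  unfold markerDecode
  split
  · rename_i h
    have hmem := Finset.min'_mem _ h
    have h1 := (Finset.mem_Icc.mp (Finset.mem_filter.mp hmem).1).1
    have h2 := (Finset.mem_Icc.mp (Finset.mem_filter.mp hmem).1).2
    omega
  · exact Nat.zero_le δ

lemma blockList_getElem (n ℓ : ℕ) (x : Fin n → Bool) (j m : ℕ) (hm : m < ℓ) :
    (blockList n ℓ x j).getD m false = bitAt n x ((j - 1) * ℓ + m) := by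
  simp [blockList, List.getD_eq_getElem?_getD, List.getElem?_map, List.getElem?_range hm]

lemma blockList_length (n ℓ : ℕ) (x : Fin n → Bool) (j : ℕ) :
    (blockList n ℓ x j).length = ℓ := by simp [blockList]

lemma marker_decode_correct (n ℓ δ : ℕ) (hδ : 0 < δ) (hℓ : 2 * δ < ℓ)
    (x : Fin n → Bool) (hx : x ∈ markerCode n ℓ δ) (d : ℕ → ℕ) (y : List Bool)
    (hy : IsDelOutput n ℓ δ x d y) (j : ℕ) (hj : j ∈ Finset.Icc 1 (n / ℓ - 1)) :
    markerDecode ℓ δ (window ℓ y (startIdx ℓ d j)) = d j := by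
  obtain ⟨ys, hys, rfl⟩ := hy
  set b := n / ℓ with hb
  obtain ⟨hj1, hj2⟩ := Finset.mem_Icc.mp hj
  have hbj : j + 1 ≤ b := by omega
  -- block j and j+1 facts
  have hyj := hys j (Finset.mem_Icc.mpr ⟨hj1, by omega⟩)
  have hyj1 := hys (j + 1) (Finset.mem_Icc.mpr ⟨by omega, hbj⟩)
  obtain ⟨hsubj, hdj, hlenj⟩ := hyj
  obtain ⟨hsubj1, hdj1, hlenj1⟩ := hyj1
  -- decompose the flatten
  have hsplit : List.range b = List.range (j - 1) ++ [j - 1] ++ [j] ++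
      (List.range (b - (j + 1))).map (fun m => (j + 1) + m) := by
    have h1 : b = (j + 1) + (b - (j + 1)) := by omega
    conv_lhs => rw [h1]
    rw [List.range_add]
    congr 1
    have h2 : j + 1 = (j - 1) + 1 + 1 := by omega
    rw [h2, List.range_succ, List.range_succ,
      show j - 1 + 1 = j from by omega]
  set A : List Bool := ((List.range (j - 1)).map (fun m => ys (m + 1))).flatten with hA
  set C : List Bool :=
      (((List.range (b - (j + 1))).map (fun m => (j + 1) + m)).map
        (fun m => ys (m + 1))).flatten with hC
  have hflat : ((List.range b).map (fun m => ys (m + 1))).flatten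
      = A ++ (ys j ++ (ys (j + 1) ++ C)) := by
    rw [hsplit]
    simp only [List.map_append, List.flatten_append, List.map_cons, List.map_nil,
      List.flatten_cons, List.flatten_nil, List.append_nil]
    have : j - 1 + 1 = j := by omega
    rw [this]
    simp only [List.append_assoc]
    rfl
  have hAlen : A.length = startIdx ℓ d j := by
    have hlen : ∀ m < j - 1, (ys (m + 1)).length = ℓ - d (m + 1) := by
      intro m hm
      exact (hys (m + 1) (Finset.mem_Icc.mpr ⟨by omega, by omega⟩)).2.2
    rw [hA, List.length_flatten, List.map_map]
    have h1 : ((List.range (j - 1)).map (List.length ∘ fun m => ys (m + 1))).sum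
        = ∑ m ∈ Finset.range (j - 1), (ℓ - d (m + 1)) := by
      rw [show ((List.range (j - 1)).map (List.length ∘ fun m => ys (m + 1))).sum
          = ∑ m ∈ Finset.range (j - 1), (ys (m + 1)).length from rfl]
      exact Finset.sum_congr rfl fun m hm => hlen m (Finset.mem_range.mp hm)
    rw [h1, startIdx]
    have h2 : Finset.Icc 1 (j - 1) = Finset.Ico 1 j := by
      rw [← Finset.Ico_add_one_right_eq_Icc]
      congr 1
      omega
    rw [h2, Finset.sum_Ico_eq_sum_range]
    exact Finset.sum_congr rfl fun m _ => by rw [Nat.add_comm 1 m]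
  -- window values
  have hwin : ∀ i : ℕ, i < ℓ →
      ((List.range b).map (fun m => ys (m + 1))).flatten.getD (startIdx ℓ d j + i) false
      = if i < ℓ - d j then (ys j).getD i false
        else (ys (j + 1)).getD (i - (ℓ - d j)) false := by
    intro i hi
    rw [hflat, List.getD_append_right _ _ _ _ (by omega)]
    rw [show startIdx ℓ d j + i - A.length = i by omega]
    by_cases hcase : i < ℓ - d j
    · rw [List.getD_append _ _ _ _ (by omega), if_pos hcase]
    · rw [List.getD_append_right _ _ _ _ (by omega), if_neg hcase, hlenj,
        List.getD_append _ _ _ _ (by omega)]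
  obtain ⟨hx1, hx2⟩ := hx
  -- claim 1 : bits before position ℓ - d j are true
  have claim1 : ∀ β ∈ Finset.Icc 1 δ, ℓ - δ + β - 1 < ℓ - d j →
      bitAt ℓ (window ℓ (((List.range b).map (fun m => ys (m + 1))).flatten)
        (startIdx ℓ d j)) (ℓ - δ + β - 1) = true := by
    intro β hβ hlt
    obtain ⟨hβ1, hβ2⟩ := Finset.mem_Icc.mp hβ
    set i := ℓ - δ + β - 1 with hi
    have hiℓ : i < ℓ := by omega
    rw [bitAt, dif_pos hiℓ]
    show (window ℓ _ (startIdx ℓ d j)) ⟨i, hiℓ⟩ = true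
    rw [window]
    simp only
    rw [hwin i hiℓ, if_pos hlt]
    have hilen : i < (ys j).length := by omega
    rw [List.getD_eq_getElem _ _ hilen]
    obtain ⟨m, hm1, hm2, hm3, hm4⟩ := sublist_getElem hsubj i hilen
    rw [hm4]
    have hmℓ : m < ℓ := by rw [blockList_length] at hm3; exact hm3
    have : (blockList n ℓ x j)[m] = (blockList n ℓ x j).getD m false := by
      rw [List.getD_eq_getElem _ _ hm3]
    rw [this, blockList_getElem n ℓ x j m hmℓ]
    have hmrange : m + 1 ∈ Finset.Icc (ℓ - δ + 1) ℓ := by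
      rw [Finset.mem_Icc]
      constructor
      · omega
      · rw [blockList_length] at hm2; omega
    have := hx1 j hj (m + 1) hmrange
    rwa [show (j - 1) * ℓ + (m + 1) - 1 = (j - 1) * ℓ + m by omega] at this
  -- claim 2 : if d j ≠ 0 then the bit at position ℓ - d j is false
  have claim2 : d j ≠ 0 →
      bitAt ℓ (window ℓ (((List.range b).map (fun m => ys (m + 1))).flatten)
        (startIdx ℓ d j)) (ℓ - (d j)) = false := by
    intro hd0
    have hiℓ : ℓ - d j < ℓ := by omega
    rw [bitAt, dif_pos hiℓ]
    show (window ℓ _ (startIdx ℓ d j)) ⟨ℓ - d j, hiℓ⟩ = false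
    rw [window]
    simp only
    rw [hwin (ℓ - d j) hiℓ, if_neg (by omega)]
    rw [show ℓ - d j - (ℓ - d j) = 0 by omega]
    have h0len : 0 < (ys (j + 1)).length := by omega
    rw [List.getD_eq_getElem _ _ h0len]
    obtain ⟨m, hm1, hm2, hm3, hm4⟩ := sublist_getElem hsubj1 0 h0len
    rw [hm4]
    have hmℓ : m < ℓ := by rw [blockList_length] at hm3; exact hm3
    have : (blockList n ℓ x (j + 1))[m] = (blockList n ℓ x (j + 1)).getD m false := by
      rw [List.getD_eq_getElem _ _ hm3]
    rw [this, blockList_getElem n ℓ x (j + 1) m hmℓ]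
    have hmδ : m ≤ δ := by rw [blockList_length] at hm2; omega
    have hj1mem : j + 1 ∈ Finset.Icc 2 b := Finset.mem_Icc.mpr ⟨by omega, hbj⟩
    have := hx2 (j + 1) hj1mem (m + 1) (Finset.mem_Icc.mpr ⟨by omega, by omega⟩)
    rwa [show (j + 1 - 1) * ℓ + (m + 1) - 1 = (j + 1 - 1) * ℓ + m by omega] at this
  -- conclude
  set w := window ℓ (((List.range b).map (fun m => ys (m + 1))).flatten) (startIdx ℓ d j)
    with hw
  set F := (Finset.Icc 1 δ).filter (fun β => bitAt ℓ w (ℓ - δ + β - 1) = false) with hF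
  by_cases hd0 : d j = 0
  · have hFempty : ¬ F.Nonempty := by
      rw [Finset.not_nonempty_iff_eq_empty, Finset.filter_eq_empty_iff]
      intro β hβ
      obtain ⟨hβ1, hβ2⟩ := Finset.mem_Icc.mp hβ
      have := claim1 β hβ (by omega)
      simp [this]
    rw [markerDecode, dif_neg hFempty, hd0]
  · have hβ0 : δ - d j + 1 ∈ F := by
      rw [hF, Finset.mem_filter]
      refine ⟨Finset.mem_Icc.mpr ⟨by omega, by omega⟩, ?_⟩
      rw [show ℓ - δ + (δ - d j + 1) - 1 = ℓ - d j by omega]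
      exact claim2 hd0
    have hFne : F.Nonempty := ⟨_, hβ0⟩
    have hmin : F.min' hFne = δ - d j + 1 := by
      have hle : F.min' hFne ≤ δ - d j + 1 := Finset.min'_le _ _ hβ0
      have hmem := Finset.min'_mem F hFne
      have hmem1 : F.min' hFne ∈ Finset.Icc 1 δ := (Finset.mem_filter.mp hmem).1
      have hmem2 : bitAt ℓ w (ℓ - δ + F.min' hFne - 1) = false :=
        (Finset.mem_filter.mp hmem).2
      obtain ⟨hm1, hm2⟩ := Finset.mem_Icc.mp hmem1
      by_contra hne
      have hlt : F.min' hFne < δ - d j + 1 := by omega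
      have := claim1 (F.min' hFne) hmem1 (by omega)
      simp only [this] at hmem2
      exact Bool.noConfusion hmem2
    rw [markerDecode, dif_pos hFne, hmin]
    omega

theorem markerCode_block_decodable
    (n ℓ δ : ℕ) (hδ : 0 < δ) (hℓ : 2 * δ < ℓ) (hℓn : ℓ ≤ n / 2) (hdvd : ℓ ∣ n) :
    BlockDecodable n ℓ δ (markerCode n ℓ δ) ∧
    (∀ w : Fin ℓ → Bool, markerDecode ℓ δ w ≤ δ) ∧
    (∀ x ∈ markerCode n ℓ δ, ∀ d : ℕ → ℕ, ∀ y : List Bool,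
      IsDelOutput n ℓ δ x d y →
      ∀ j ∈ Finset.Icc 1 (n / ℓ - 1),
        markerDecode ℓ δ (window ℓ y (startIdx ℓ d j)) = d j) := by
  refine ⟨⟨fun _ => markerDecode ℓ δ, fun j w => markerDecode_le ℓ δ w,
    fun x hx d y hy j hj => marker_decode_correct n ℓ δ hδ hℓ x hx d y hy j hj⟩,
    fun w => markerDecode_le ℓ δ w,
    fun x hx d y hy j hj => marker_decode_correct n ℓ δ hδ hℓ x hx d y hy j hj⟩
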